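/- Define the expected vertical height H_exp(X,Y) := ∫₀^W H(X,Y,x) φ(x) dx, where H(X,Y,x) := (v/(1−v²))·√((X−x)² + Y²) − (v²/(1−v²))·Y. Then H_exp attains a global minimum over ℝ × [0,∞) at a unique point (X*,Y*), and this point satisfies 0 < X* < W and Y* > 0. -/

import Mathlib

open Real MeasureTheory Filter Set Topology

namespace Stmt15Aux
lemma sqrt_lip (a b c : ℝ) (hc : 0 ≤ c) :
    Real.sqrt (a ^ 2 + c) ≤ Real.sqrt (b ^ 2 + c) + |a - b| := by
  have hb : |b| ≤ Real.sqrt (b ^ 2 + c) := by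
    rw [← Real.sqrt_sq_eq_abs]; exact Real.sqrt_le_sqrt (by linarith)
  have h0 : 0 ≤ Real.sqrt (b ^ 2 + c) := Real.sqrt_nonneg _
  have hbb : b * (a - b) ≤ Real.sqrt (b ^ 2 + c) * |a - b| := by
    calc b * (a - b) ≤ |b * (a - b)| := le_abs_self _
      _ = |b| * |a - b| := abs_mul _ _
      _ ≤ Real.sqrt (b ^ 2 + c) * |a - b| :=
        mul_le_mul_of_nonneg_right hb (abs_nonneg _)
  have h1 : a ^ 2 + c ≤ (Real.sqrt (b ^ 2 + c) + |a - b|) ^ 2 := by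
    have hs : (Real.sqrt (b ^ 2 + c)) ^ 2 = b ^ 2 + c := Real.sq_sqrt (by positivity)
    nlinarith [sq_abs (a - b)]
  calc Real.sqrt (a ^ 2 + c) ≤ Real.sqrt ((Real.sqrt (b ^ 2 + c) + |a - b|) ^ 2) :=
        Real.sqrt_le_sqrt h1
    _ = _ := Real.sqrt_sq (by positivity)

lemma tri_le (a₁ a₂ y₁ y₂ : ℝ) :
    Real.sqrt ((a₁ + a₂) ^ 2 + (y₁ + y₂) ^ 2) ≤
      Real.sqrt (a₁ ^ 2 + y₁ ^ 2) + Real.sqrt (a₂ ^ 2 + y₂ ^ 2) := by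
  set s₁ := Real.sqrt (a₁ ^ 2 + y₁ ^ 2) with hs₁
  set s₂ := Real.sqrt (a₂ ^ 2 + y₂ ^ 2) with hs₂
  have h1 : s₁ ^ 2 = a₁ ^ 2 + y₁ ^ 2 := Real.sq_sqrt (by positivity)
  have h2 : s₂ ^ 2 = a₂ ^ 2 + y₂ ^ 2 := Real.sq_sqrt (by positivity)
  have h1n : 0 ≤ s₁ := Real.sqrt_nonneg _
  have h2n : 0 ≤ s₂ := Real.sqrt_nonneg _
  have key : a₁ * a₂ + y₁ * y₂ ≤ s₁ * s₂ := by
    nlinarith [sq_nonneg (a₁ * y₂ - a₂ * y₁), sq_nonneg (s₁ * s₂ - (a₁ * a₂ + y₁ * y₂)),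
      sq_nonneg (s₁ * s₂ + (a₁ * a₂ + y₁ * y₂)), mul_nonneg h1n h2n]
  have h3 : (a₁ + a₂) ^ 2 + (y₁ + y₂) ^ 2 ≤ (s₁ + s₂) ^ 2 := by nlinarith
  calc Real.sqrt ((a₁ + a₂) ^ 2 + (y₁ + y₂) ^ 2) ≤ Real.sqrt ((s₁ + s₂) ^ 2) :=
        Real.sqrt_le_sqrt h3
    _ = s₁ + s₂ := Real.sqrt_sq (by positivity)

lemma tri_lt (a₁ a₂ y₁ y₂ : ℝ) (h : a₁ * y₂ ≠ a₂ * y₁) :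
    Real.sqrt ((a₁ + a₂) ^ 2 + (y₁ + y₂) ^ 2) <
      Real.sqrt (a₁ ^ 2 + y₁ ^ 2) + Real.sqrt (a₂ ^ 2 + y₂ ^ 2) := by
  set s₁ := Real.sqrt (a₁ ^ 2 + y₁ ^ 2) with hs₁
  set s₂ := Real.sqrt (a₂ ^ 2 + y₂ ^ 2) with hs₂
  have h1 : s₁ ^ 2 = a₁ ^ 2 + y₁ ^ 2 := Real.sq_sqrt (by positivity)
  have h2 : s₂ ^ 2 = a₂ ^ 2 + y₂ ^ 2 := Real.sq_sqrt (by positivity)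
  have h1n : 0 ≤ s₁ := Real.sqrt_nonneg _
  have h2n : 0 ≤ s₂ := Real.sqrt_nonneg _
  have hd : 0 < (a₁ * y₂ - a₂ * y₁) ^ 2 := by
    have h' : a₁ * y₂ - a₂ * y₁ ≠ 0 := sub_ne_zero.mpr h
    positivity
  have key : a₁ * a₂ + y₁ * y₂ < s₁ * s₂ := by
    nlinarith [sq_nonneg (s₁ * s₂ - (a₁ * a₂ + y₁ * y₂)),
      sq_nonneg (s₁ * s₂ + (a₁ * a₂ + y₁ * y₂)), mul_nonneg h1n h2n]
  have h3 : (a₁ + a₂) ^ 2 + (y₁ + y₂) ^ 2 < (s₁ + s₂) ^ 2 := by nlinarith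
  have hspos : 0 < s₁ + s₂ := by nlinarith [sq_nonneg (a₁ + a₂), sq_nonneg (y₁ + y₂)]
  exact (Real.sqrt_lt' hspos).2 h3

lemma sqrt_abs_le (a t : ℝ) : Real.sqrt (a ^ 2 + t ^ 2) ≤ |a| + |t| := by
  have h1 : a ^ 2 + t ^ 2 ≤ (|a| + |t|) ^ 2 := by
    nlinarith [sq_abs a, sq_abs t, mul_nonneg (abs_nonneg a) (abs_nonneg t)]
  calc Real.sqrt (a ^ 2 + t ^ 2) ≤ Real.sqrt ((|a| + |t|) ^ 2) := Real.sqrt_le_sqrt h1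
    _ = _ := Real.sqrt_sq (by positivity)

lemma sqrt_sub_abs_le (a t : ℝ) (ha : a ≠ 0) :
    Real.sqrt (a ^ 2 + t ^ 2) - |a| ≤ t ^ 2 / |a| := by
  have ha' : 0 < |a| := abs_pos.2 ha
  have h1 : a ^ 2 + t ^ 2 ≤ (|a| + t ^ 2 / |a|) ^ 2 := by
    have h2 : (|a| + t ^ 2 / |a|) ^ 2 = a ^ 2 + 2 * t ^ 2 + (t ^ 2 / |a|) ^ 2 := by
      field_simp; nlinarith [sq_abs a]
    nlinarith [sq_nonneg (t ^ 2 / |a|)]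
  have := Real.sqrt_le_sqrt h1
  rw [Real.sqrt_sq (by positivity)] at this
  linarith


lemma int_on {W M : ℝ} {φ : ℝ → ℝ} (hφm : Measurable φ)
    (hφ0 : ∀ x, 0 ≤ φ x) (hφM : ∀ x, φ x ≤ M)
    (ψ : ℝ → ℝ) (hψ : Continuous ψ) :
    IntegrableOn (fun x => ψ x * φ x) (Set.Ioc 0 W) := by
  obtain ⟨C, hC⟩ := (isCompact_Icc (a := (0:ℝ)) (b := W)).exists_bound_of_continuousOn
    hψ.continuousOn
  have hCM : ∀ x ∈ Set.Ioc (0:ℝ) W, ‖ψ x * φ x‖ ≤ |C| * M := by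
    intro x hx
    have h1 : ‖ψ x‖ ≤ |C| := le_trans (hC x (Set.Ioc_subset_Icc_self hx)) (le_abs_self C)
    have h2 : |φ x| = φ x := abs_of_nonneg (hφ0 x)
    calc ‖ψ x * φ x‖ = ‖ψ x‖ * |φ x| := by rw [norm_mul]; rfl
      _ ≤ |C| * M := by
          rw [h2]
          exact mul_le_mul h1 (hφM x) (hφ0 x) (abs_nonneg C)
  apply Measure.integrableOn_of_bounded (M := |C| * M) measure_Ioc_lt_top.ne
    ((hψ.measurable.mul hφm).aestronglyMeasurable)
  exact (ae_restrict_iff' measurableSet_Ioc).2 (ae_of_all _ hCM)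

lemma supp_pos {W : ℝ} {φ : ℝ → ℝ} (hφm : Measurable φ)
    (hφ1 : ∫ x in Set.Ioc 0 W, φ x = 1) :
    0 < volume (Function.support φ ∩ Set.Ioc 0 W) := by
  by_contra h
  push_neg at h
  have h0 : volume (Function.support φ ∩ Set.Ioc 0 W) = 0 := le_antisymm h zero_le
  have hnull : volume.restrict (Set.Ioc 0 W) {x | φ x ≠ 0} = 0 := by
    rw [show {x | φ x ≠ 0} = φ ⁻¹' {0}ᶜ from rfl,
      Measure.restrict_apply (hφm (measurableSet_singleton 0).compl)]
    rw [Function.support_eq_preimage] at h0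
    exact h0
  have hae : ∀ᵐ x ∂volume.restrict (Set.Ioc 0 W), φ x = 0 := by
    rw [ae_iff]; exact hnull
  have : ∫ x in Set.Ioc 0 W, φ x = 0 := by
    rw [integral_congr_ae hae, integral_zero]
  rw [hφ1] at this; exact one_ne_zero this

lemma int_pos {W M : ℝ} {φ : ℝ → ℝ} (hφm : Measurable φ)
    (hφ0 : ∀ x, 0 ≤ φ x) (hφM : ∀ x, φ x ≤ M)
    (hφ1 : ∫ x in Set.Ioc 0 W, φ x = 1)
    (ψ : ℝ → ℝ) (hψc : Continuous ψ)
    (hψ0 : ∀ x ∈ Set.Ioc (0:ℝ) W, 0 ≤ ψ x) (x₀ : ℝ)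
    (hψp : ∀ x ∈ Set.Ioc (0:ℝ) W, x ≠ x₀ → 0 < ψ x) :
    0 < ∫ x in Set.Ioc 0 W, ψ x * φ x := by
  have hgint := int_on (W := W) hφm hφ0 hφM ψ hψc
  have hnonneg : 0 ≤ᵐ[volume.restrict (Set.Ioc 0 W)] fun x => ψ x * φ x :=
    (ae_restrict_iff' measurableSet_Ioc).2
      (ae_of_all _ fun x hx => mul_nonneg (hψ0 x hx) (hφ0 x))
  rw [setIntegral_pos_iff_support_of_nonneg_ae hnonneg hgint]
  have hsub : (Function.support φ ∩ Set.Ioc 0 W) \ {x₀} ⊆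
      Function.support (fun x => ψ x * φ x) ∩ Set.Ioc 0 W := by
    rintro x ⟨⟨hxφ, hxI⟩, hx0⟩
    refine ⟨mul_ne_zero (hψp x hxI (by simpa using hx0)).ne' hxφ, hxI⟩
  calc (0:ENNReal) < volume ((Function.support φ ∩ Set.Ioc 0 W) \ {x₀}) := by
        rw [measure_diff_null (measure_singleton x₀)]
        exact supp_pos hφm hφ1
    _ ≤ _ := measure_mono hsub


lemma double_sqrt (a b : ℝ) :
    Real.sqrt ((2 * a) ^ 2 + (2 * b) ^ 2) = 2 * Real.sqrt (a ^ 2 + b ^ 2) := by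
  rw [show (2 * a) ^ 2 + (2 * b) ^ 2 = 2 ^ 2 * (a ^ 2 + b ^ 2) by ring,
    Real.sqrt_mul (by positivity), Real.sqrt_sq (by norm_num : (0:ℝ) ≤ 2)]
end Stmt15Aux

open Stmt15Aux

set_option maxHeartbeats 1000000 in
/-- The expected vertical height `H_exp` attains a global minimum over ℝ × [0,∞) at a
unique point `(X*,Y*)`, which satisfies `0 < X* < W` and `Y* > 0`. -/
theorem stmt_15 (W M v : ℝ) (φ : ℝ → ℝ)
    (hW : 0 < W) (hM : 0 < M) (hφm : Measurable φ)
    (hφ0 : ∀ x, 0 ≤ φ x) (hφM : ∀ x, φ x ≤ M)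
    (hφs : ∀ x, x ∉ Set.Icc (0:ℝ) W → φ x = 0)
    (hφ1 : (∫ x in (0:ℝ)..W, φ x) = 1)
    (hv0 : 0 < v) (hv1 : v < 1)
    (Hexp : ℝ → ℝ → ℝ)
    (hHexp : ∀ X Y : ℝ, Hexp X Y =
      ∫ x in (0:ℝ)..W,
        (v / (1 - v ^ 2) * Real.sqrt ((X - x) ^ 2 + Y ^ 2) - v ^ 2 / (1 - v ^ 2) * Y) * φ x) :
    ∃ Xs Ys : ℝ, 0 ≤ Ys ∧
      (∀ X Y : ℝ, 0 ≤ Y → Hexp Xs Ys ≤ Hexp X Y) ∧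
      (∀ X' Y' : ℝ, 0 ≤ Y' → (∀ X Y : ℝ, 0 ≤ Y → Hexp X' Y' ≤ Hexp X Y) →
        X' = Xs ∧ Y' = Ys) ∧
      0 < Xs ∧ Xs < W ∧ 0 < Ys := by
  have hv2 : (0:ℝ) < 1 - v ^ 2 := by nlinarith
  set c : ℝ := v / (1 - v ^ 2) with hc
  have hcpos : 0 < c := by positivity
  have hφ1' : ∫ x in Set.Ioc 0 W, φ x = 1 := by
    rw [← intervalIntegral.integral_of_le hW.le]; exact hφ1
  set F : ℝ → ℝ → ℝ :=
    fun X Y => ∫ x in Set.Ioc 0 W, Real.sqrt ((X - x) ^ 2 + Y ^ 2) * φ x with hF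
  have hcont : ∀ X Y : ℝ, Continuous fun x : ℝ => Real.sqrt ((X - x) ^ 2 + Y ^ 2) :=
    fun X Y => Real.continuous_sqrt.comp (by continuity)
  have hint : ∀ X Y : ℝ,
      IntegrableOn (fun x => Real.sqrt ((X - x) ^ 2 + Y ^ 2) * φ x) (Set.Ioc 0 W) :=
    fun X Y => int_on hφm hφ0 hφM _ (hcont X Y)
  have hφint : IntegrableOn φ (Set.Ioc 0 W) := by
    have := int_on (W := W) hφm hφ0 hφM (fun _ => 1) continuous_const
    simpa using this
  have hH : ∀ X Y : ℝ, Hexp X Y = c * F X Y - c * v * Y := by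
    intro X Y
    rw [hHexp, intervalIntegral.integral_of_le hW.le]
    have e1 : ∀ x : ℝ,
        (v / (1 - v ^ 2) * Real.sqrt ((X - x) ^ 2 + Y ^ 2) - v ^ 2 / (1 - v ^ 2) * Y) * φ x
        = c * (Real.sqrt ((X - x) ^ 2 + Y ^ 2) * φ x) - (c * v * Y) * φ x := by
      intro x; rw [hc]; ring
    simp only [← hc] at e1
    simp only [e1]
    rw [integral_sub ((hint X Y).const_mul c) (hφint.const_mul (c * v * Y)),
      integral_const_mul, integral_const_mul, hφ1', hF]
    ring
  -- Lipschitz bound for F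
  have hsl : ∀ X Y X' Y' x : ℝ,
      Real.sqrt ((X - x) ^ 2 + Y ^ 2) ≤ Real.sqrt ((X' - x) ^ 2 + Y' ^ 2) + (|X - X'| + |Y - Y'|) := by
    intro X Y X' Y' x
    have h1 : Real.sqrt ((X - x) ^ 2 + Y ^ 2) ≤ Real.sqrt ((X' - x) ^ 2 + Y ^ 2) + |X - X'| := by
      have := sqrt_lip (X - x) (X' - x) (Y ^ 2) (sq_nonneg Y)
      rw [show X - x - (X' - x) = X - X' by ring] at this
      exact this
    have h2 : Real.sqrt ((X' - x) ^ 2 + Y ^ 2) ≤ Real.sqrt ((X' - x) ^ 2 + Y' ^ 2) + |Y - Y'| := by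
      have := sqrt_lip Y Y' ((X' - x) ^ 2) (sq_nonneg _)
      rw [add_comm (Y ^ 2), add_comm (Y' ^ 2)] at this
      exact this
    linarith
  have hdiff : ∀ X Y X' Y' : ℝ, |F X Y - F X' Y'| ≤ |X - X'| + |Y - Y'| := by
    intro X Y X' Y'
    set L := |X - X'| + |Y - Y'| with hL
    have hL0 : 0 ≤ L := by positivity
    have key : ∀ x ∈ Set.Ioc (0:ℝ) W,
        |Real.sqrt ((X - x) ^ 2 + Y ^ 2) * φ x - Real.sqrt ((X' - x) ^ 2 + Y' ^ 2) * φ x|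
          ≤ L * φ x := by
      intro x _
      have h1 := hsl X Y X' Y' x
      have h2 := hsl X' Y' X Y x
      rw [abs_sub_comm X' X, abs_sub_comm Y' Y] at h2
      rw [show Real.sqrt ((X - x) ^ 2 + Y ^ 2) * φ x - Real.sqrt ((X' - x) ^ 2 + Y' ^ 2) * φ x
          = (Real.sqrt ((X - x) ^ 2 + Y ^ 2) - Real.sqrt ((X' - x) ^ 2 + Y' ^ 2)) * φ x by ring,
        abs_mul, abs_of_nonneg (hφ0 x)]
      apply mul_le_mul_of_nonneg_right _ (hφ0 x)
      rw [abs_sub_le_iff]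
      constructor <;> linarith
    have e0 : F X Y - F X' Y' = ∫ x in Set.Ioc 0 W,
        (Real.sqrt ((X - x) ^ 2 + Y ^ 2) * φ x - Real.sqrt ((X' - x) ^ 2 + Y' ^ 2) * φ x) := by
      rw [hF, integral_sub (hint X Y) (hint X' Y')]
    rw [e0]
    calc |∫ x in Set.Ioc 0 W,
          (Real.sqrt ((X - x) ^ 2 + Y ^ 2) * φ x - Real.sqrt ((X' - x) ^ 2 + Y' ^ 2) * φ x)|
        ≤ ∫ x in Set.Ioc 0 W,
          |Real.sqrt ((X - x) ^ 2 + Y ^ 2) * φ x - Real.sqrt ((X' - x) ^ 2 + Y' ^ 2) * φ x| := by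
          simpa [Real.norm_eq_abs] using
            norm_integral_le_integral_norm (μ := volume.restrict (Set.Ioc 0 W))
              (fun x => Real.sqrt ((X - x) ^ 2 + Y ^ 2) * φ x
                - Real.sqrt ((X' - x) ^ 2 + Y' ^ 2) * φ x)
      _ ≤ ∫ x in Set.Ioc 0 W, L * φ x := by
          refine setIntegral_mono_on ((hint X Y).sub (hint X' Y')).abs
            (hφint.const_mul L) measurableSet_Ioc key
      _ = L := by rw [integral_const_mul, hφ1', mul_one]
  -- continuity
  have hGcont : Continuous (fun p : ℝ × ℝ => Hexp p.1 p.2) := by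
    refine LipschitzWith.continuous (K := Real.toNNReal (c * (2 + v)))
      (LipschitzWith.of_dist_le_mul fun p q => ?_)
    have h1 := hdiff p.1 p.2 q.1 q.2
    have h2 : |p.1 - q.1| ≤ dist p q := by
      rw [Prod.dist_eq, Real.dist_eq]; exact le_max_left _ _
    have h3 : |p.2 - q.2| ≤ dist p q := by
      rw [Prod.dist_eq, Real.dist_eq (p.2)]; exact le_max_right _ _
    have hd0 : 0 ≤ dist p q := dist_nonneg
    rw [Real.dist_eq, hH p.1 p.2, hH q.1 q.2]
    have hcoe : (Real.toNNReal (c * (2 + v)) : ℝ) = c * (2 + v) :=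
      Real.coe_toNNReal _ (by positivity)
    rw [hcoe]
    have h4 : |c * F p.1 p.2 - c * v * p.2 - (c * F q.1 q.2 - c * v * q.2)|
        ≤ c * |F p.1 p.2 - F q.1 q.2| + c * v * |p.2 - q.2| := by
      have := abs_sub (c * (F p.1 p.2 - F q.1 q.2)) (c * v * (p.2 - q.2))
      calc |c * F p.1 p.2 - c * v * p.2 - (c * F q.1 q.2 - c * v * q.2)|
          = |c * (F p.1 p.2 - F q.1 q.2) - c * v * (p.2 - q.2)| := by ring_nf
        _ ≤ |c * (F p.1 p.2 - F q.1 q.2)| + |c * v * (p.2 - q.2)| := abs_sub _ _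
        _ = c * |F p.1 p.2 - F q.1 q.2| + c * v * |p.2 - q.2| := by
            rw [abs_mul, abs_mul, abs_of_pos hcpos, abs_of_pos (by positivity : (0:ℝ) < c * v)]
    have h5 : |F p.1 p.2 - F q.1 q.2| ≤ 2 * dist p q := by linarith
    nlinarith [mul_le_mul_of_nonneg_left h5 hcpos.le,
      mul_le_mul_of_nonneg_left h3 (by positivity : (0:ℝ) ≤ c * v)]
  -- coercivity
  have hFlow : ∀ X Y : ℝ, Real.sqrt (X ^ 2 + Y ^ 2) - W ≤ F X Y := by
    intro X Y
    have hpt : ∀ x ∈ Set.Ioc (0:ℝ) W,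
        (Real.sqrt (X ^ 2 + Y ^ 2) - W) * φ x ≤ Real.sqrt ((X - x) ^ 2 + Y ^ 2) * φ x := by
      intro x hx
      have h1 : Real.sqrt (X ^ 2 + Y ^ 2) ≤ Real.sqrt ((X - x) ^ 2 + Y ^ 2) + |x| := by
        have := sqrt_lip X (X - x) (Y ^ 2) (sq_nonneg Y)
        rw [show X - (X - x) = x by ring] at this
        exact this
      have h2 : |x| ≤ W := by rw [abs_of_pos hx.1]; exact hx.2
      exact mul_le_mul_of_nonneg_right (by linarith) (hφ0 x)
    have h3 := setIntegral_mono_on (hφint.const_mul (Real.sqrt (X ^ 2 + Y ^ 2) - W))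
      (hint X Y) measurableSet_Ioc hpt
    rwa [integral_const_mul, hφ1', mul_one] at h3
  have hcoer : ∀ X Y : ℝ, 0 ≤ Y →
      c * ((1 - v) * Real.sqrt (X ^ 2 + Y ^ 2) - W) ≤ Hexp X Y := by
    intro X Y hY
    have h1 := hFlow X Y
    have h2 : Y ≤ Real.sqrt (X ^ 2 + Y ^ 2) := by
      nlinarith [Real.sq_sqrt (show (0:ℝ) ≤ X ^ 2 + Y ^ 2 by positivity),
        Real.sqrt_nonneg (X ^ 2 + Y ^ 2), sq_nonneg X]
    rw [hH X Y]
    nlinarith [mul_le_mul_of_nonneg_left h1 hcpos.le,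
      mul_le_mul_of_nonneg_left h2 (by positivity : (0:ℝ) ≤ c * v)]
  -- existence of global minimizer
  obtain ⟨Xs, Ys, hYs, hmin⟩ :
      ∃ Xs Ys : ℝ, 0 ≤ Ys ∧ ∀ X Y : ℝ, 0 ≤ Y → Hexp Xs Ys ≤ Hexp X Y := by
    set A := Hexp 0 0 with hA
    set R : ℝ := (|A| / c + W + 1) / (1 - v) with hR
    have h1v : (0:ℝ) < 1 - v := by linarith
    have hRpos : 0 < R := by positivity
    have hRval : (1 - v) * R = |A| / c + W + 1 := by
      rw [hR]; field_simp
    have hout : ∀ p : ℝ × ℝ, 0 ≤ p.2 → R < ‖p‖ → A < Hexp p.1 p.2 := by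
      intro p hp2 hnorm
      have h1 : ‖p‖ ≤ Real.sqrt (p.1 ^ 2 + p.2 ^ 2) := by
        rw [Prod.norm_def]
        apply max_le
        · rw [Real.norm_eq_abs, ← Real.sqrt_sq_eq_abs]
          exact Real.sqrt_le_sqrt (by nlinarith [sq_nonneg p.2])
        · rw [Real.norm_eq_abs, ← Real.sqrt_sq_eq_abs]
          exact Real.sqrt_le_sqrt (by nlinarith [sq_nonneg p.1])
      have h2 := hcoer p.1 p.2 hp2
      have h3 : (1 - v) * R - W < (1 - v) * Real.sqrt (p.1 ^ 2 + p.2 ^ 2) - W := by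
        have := mul_lt_mul_of_pos_left (lt_of_lt_of_le hnorm h1) h1v
        linarith
      have h4 := mul_lt_mul_of_pos_left h3 hcpos
      have h5 : c * ((1 - v) * R - W) = |A| + c := by
        rw [hRval]; field_simp; ring
      have h6 := le_abs_self A
      linarith
    set K : Set (ℝ × ℝ) := Metric.closedBall 0 R ∩ {p : ℝ × ℝ | 0 ≤ p.2} with hK
    have hKc : IsCompact K :=
      (isCompact_closedBall 0 R).inter_right (isClosed_le continuous_const continuous_snd)
    have hKne : ((0, 0) : ℝ × ℝ) ∈ K :=
      ⟨Metric.mem_closedBall_self hRpos.le, by simp⟩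
    obtain ⟨p₀, hp₀K, hp₀⟩ := hKc.exists_isMinOn ⟨_, hKne⟩ hGcont.continuousOn
    rw [isMinOn_iff] at hp₀
    refine ⟨p₀.1, p₀.2, hp₀K.2, ?_⟩
    intro X Y hY
    by_cases hmem : ((X, Y) : ℝ × ℝ) ∈ K
    · exact hp₀ (X, Y) hmem
    · have hbig : R < ‖((X, Y) : ℝ × ℝ)‖ := by
        by_contra hle
        push_neg at hle
        exact hmem ⟨mem_closedBall_zero_iff.2 hle, hY⟩
      have h7 := hout (X, Y) hY hbig
      have h8 : Hexp p₀.1 p₀.2 ≤ A := hp₀ (0, 0) hKne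
      exact le_of_lt (lt_of_le_of_lt h8 h7)
  -- any global minimizer is interior
  have hprop : ∀ Xm Ym : ℝ, 0 ≤ Ym → (∀ X Y : ℝ, 0 ≤ Y → Hexp Xm Ym ≤ Hexp X Y) →
      0 < Ym ∧ 0 < Xm ∧ Xm < W := by
    intro Xm Ym hYm hm
    have hFm : ∀ X Y : ℝ, 0 ≤ Y → c * F Xm Ym - c * v * Ym ≤ c * F X Y - c * v * Y := by
      intro X Y hY; rw [← hH, ← hH]; exact hm X Y hY
    set t : ℕ → ℝ := fun n => 1 / (n + 1 : ℝ) with ht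
    have htpos : ∀ n : ℕ, 0 < t n := fun n => by positivity
    have ht0 : Tendsto t atTop (𝓝 0) := tendsto_one_div_add_atTop_nhds_zero_nat
    have haeXm : ∀ (z : ℝ), ∀ᵐ x ∂(volume.restrict (Set.Ioc (0:ℝ) W)), x ≠ z := by
      intro z
      apply ae_restrict_of_ae
      rw [ae_iff]
      have h0 : {x : ℝ | ¬x ≠ z} = {z} := by ext y; simp
      rw [h0]
      exact measure_singleton z
    have hYpos : 0 < Ym := by
      rcases hYm.lt_or_eq with hlt | heq
      · exact hlt
      exfalso
      set q : ℕ → ℝ → ℝ := fun n x =>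
        (Real.sqrt ((Xm - x) ^ 2 + t n ^ 2) - Real.sqrt ((Xm - x) ^ 2 + 0 ^ 2)) / t n * φ x
        with hq
      have hqint : ∀ n, IntegrableOn (q n) (Set.Ioc 0 W) := fun n =>
        int_on hφm hφ0 hφM _ (((hcont Xm (t n)).sub (hcont Xm 0)).div_const _)
      have hq_eq : ∀ n, ∫ x in Set.Ioc 0 W, q n x = (F Xm (t n) - F Xm 0) / t n := by
        intro n
        have e : (fun x => q n x) = fun x =>
            (Real.sqrt ((Xm - x) ^ 2 + t n ^ 2) * φ x
              - Real.sqrt ((Xm - x) ^ 2 + 0 ^ 2) * φ x) / t n := by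
          funext x; rw [hq]; ring
        rw [e, integral_div, integral_sub (hint Xm (t n)) (hint Xm 0), hF]
      have hq_ge : ∀ n, v ≤ ∫ x in Set.Ioc 0 W, q n x := by
        intro n
        rw [hq_eq n, le_div_iff₀ (htpos n)]
        have h1 := hFm Xm (t n) (htpos n).le
        rw [← heq] at h1
        have h2 : c * (v * t n) ≤ c * (F Xm (t n) - F Xm 0) := by ring_nf; ring_nf at h1; linarith
        have h3 := le_of_mul_le_mul_left h2 hcpos
        linarith
      have hqlim : Tendsto (fun n => ∫ x in Set.Ioc 0 W, q n x) atTop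
          (𝓝 (∫ x in Set.Ioc 0 W, (0:ℝ))) := by
        apply tendsto_integral_of_dominated_convergence (bound := fun _ => M)
        · intro n; exact (hqint n).aestronglyMeasurable
        · exact integrableOn_const measure_Ioc_lt_top.ne
        · intro n
          apply ae_of_all
          intro x
          have hmono : Real.sqrt ((Xm - x) ^ 2 + 0 ^ 2) ≤ Real.sqrt ((Xm - x) ^ 2 + t n ^ 2) :=
            Real.sqrt_le_sqrt (by nlinarith [sq_nonneg (t n)])
          have hup : Real.sqrt ((Xm - x) ^ 2 + t n ^ 2)
              ≤ Real.sqrt ((Xm - x) ^ 2 + 0 ^ 2) + t n := by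
            have h5 := sqrt_lip (t n) 0 ((Xm - x) ^ 2) (sq_nonneg _)
            rw [add_comm (t n ^ 2), add_comm ((0:ℝ) ^ 2)] at h5
            simpa [abs_of_pos (htpos n)] using h5
          have hfrac : (Real.sqrt ((Xm - x) ^ 2 + t n ^ 2)
              - Real.sqrt ((Xm - x) ^ 2 + 0 ^ 2)) / t n ≤ 1 := by
            rw [div_le_one (htpos n)]; linarith
          have hfrac0 : 0 ≤ (Real.sqrt ((Xm - x) ^ 2 + t n ^ 2)
              - Real.sqrt ((Xm - x) ^ 2 + 0 ^ 2)) / t n :=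
            div_nonneg (by linarith) (htpos n).le
          rw [hq, Real.norm_eq_abs, abs_mul, abs_of_nonneg (hφ0 x), abs_of_nonneg hfrac0]
          calc _ ≤ 1 * φ x := mul_le_mul_of_nonneg_right hfrac (hφ0 x)
            _ = φ x := one_mul _
            _ ≤ M := hφM x
        · filter_upwards [haeXm Xm] with x hx
          have ha : Xm - x ≠ 0 := sub_ne_zero.mpr (Ne.symm hx)
          have hane : (0:ℝ) < |Xm - x| := abs_pos.2 ha
          have he0 : Real.sqrt ((Xm - x) ^ 2 + 0 ^ 2) = |Xm - x| := by
            simp [Real.sqrt_sq_eq_abs]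
          have hub : ∀ n, q n x ≤ t n * (M / |Xm - x|) := by
            intro n
            have h6 := sqrt_sub_abs_le (Xm - x) (t n) ha
            rw [hq]
            have h7 : (Real.sqrt ((Xm - x) ^ 2 + t n ^ 2)
                - Real.sqrt ((Xm - x) ^ 2 + 0 ^ 2)) / t n ≤ t n / |Xm - x| := by
              rw [he0, div_le_div_iff₀ (htpos n) hane]
              calc (Real.sqrt ((Xm - x) ^ 2 + t n ^ 2) - |Xm - x|) * |Xm - x|
                  ≤ t n ^ 2 / |Xm - x| * |Xm - x| := mul_le_mul_of_nonneg_right h6 hane.le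
                _ = t n ^ 2 := div_mul_cancel₀ _ hane.ne'
                _ = t n * t n := sq (t n) ▸ by ring
            calc _ ≤ t n / |Xm - x| * φ x := mul_le_mul_of_nonneg_right h7 (hφ0 x)
              _ ≤ t n / |Xm - x| * M :=
                mul_le_mul_of_nonneg_left (hφM x) (by positivity)
              _ = t n * (M / |Xm - x|) := by ring
          have hlb : ∀ n, 0 ≤ q n x := by
            intro n
            rw [hq]
            apply mul_nonneg _ (hφ0 x)
            apply div_nonneg _ (htpos n).le
            have : Real.sqrt ((Xm - x) ^ 2 + 0 ^ 2) ≤ Real.sqrt ((Xm - x) ^ 2 + t n ^ 2) :=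
              Real.sqrt_le_sqrt (by nlinarith [sq_nonneg (t n)])
            linarith
          have hup : Tendsto (fun n => t n * (M / |Xm - x|)) atTop (𝓝 0) := by
            simpa only [zero_mul] using ht0.mul_const (M / |Xm - x|)
          exact tendsto_of_tendsto_of_tendsto_of_le_of_le tendsto_const_nhds hup hlb hub
      rw [integral_zero] at hqlim
      have hfin : v ≤ 0 := ge_of_tendsto' hqlim hq_ge
      linarith
    -- now the X bounds
    have hden : ∀ x : ℝ, 0 < Real.sqrt ((Xm - x) ^ 2 + Ym ^ 2) := fun x =>
      Real.sqrt_pos.2 (by positivity)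
    set l : ℝ → ℝ := fun x => (Xm - x) / Real.sqrt ((Xm - x) ^ 2 + Ym ^ 2) with hl
    have hlcont : Continuous l := by
      apply Continuous.div (by continuity) (hcont Xm Ym) (fun x => (hden x).ne')
    have hslope : ∀ (u : ℕ → ℝ), (∀ n, u n ≠ 0) → Tendsto u atTop (𝓝 0) →
        ∀ x : ℝ, Tendsto (fun n =>
          (Real.sqrt ((Xm + u n - x) ^ 2 + Ym ^ 2) - Real.sqrt ((Xm - x) ^ 2 + Ym ^ 2)) / u n)
          atTop (𝓝 (l x)) := by
      intro u hu hu0 x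
      have hne : (Xm - x) ^ 2 + Ym ^ 2 ≠ 0 := by positivity
      have h1 : HasDerivAt (fun z : ℝ => (z - x) ^ 2 + Ym ^ 2) (2 * (Xm - x)) Xm := by
        have := (((hasDerivAt_id Xm).sub_const x).pow 2).add_const (Ym ^ 2)
        simpa using this
      have h2 := h1.sqrt hne
      have h3 : 2 * (Xm - x) / (2 * Real.sqrt ((Xm - x) ^ 2 + Ym ^ 2)) = l x := by
        rw [hl, mul_div_mul_left _ _ (two_ne_zero)]
      rw [h3] at h2
      have h4 := hasDerivAt_iff_tendsto_slope.1 h2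
      have h5 : Tendsto (fun n => Xm + u n) atTop (𝓝[≠] Xm) := by
        apply tendsto_nhdsWithin_of_tendsto_nhds_of_eventually_within
        · simpa using tendsto_const_nhds.add hu0
        · exact Eventually.of_forall fun n => by simp [hu n]
      have h6 := h4.comp h5
      refine h6.congr fun n => ?_
      show slope (fun z : ℝ => Real.sqrt ((z - x) ^ 2 + Ym ^ 2)) Xm (Xm + u n) = _
      rw [slope_def_field, add_sub_cancel_left]
    have hbound : ∀ (u : ℝ), u ≠ 0 → ∀ x : ℝ,
        ‖(Real.sqrt ((Xm + u - x) ^ 2 + Ym ^ 2) - Real.sqrt ((Xm - x) ^ 2 + Ym ^ 2)) / u * φ x‖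
          ≤ M := by
      intro u hu x
      have ha := sqrt_lip (Xm + u - x) (Xm - x) (Ym ^ 2) (sq_nonneg Ym)
      have hb := sqrt_lip (Xm - x) (Xm + u - x) (Ym ^ 2) (sq_nonneg Ym)
      rw [show Xm + u - x - (Xm - x) = u by ring] at ha
      rw [show Xm - x - (Xm + u - x) = -u by ring, abs_neg] at hb
      have habs : |Real.sqrt ((Xm + u - x) ^ 2 + Ym ^ 2)
          - Real.sqrt ((Xm - x) ^ 2 + Ym ^ 2)| ≤ |u| :=
        abs_sub_le_iff.2 ⟨by linarith, by linarith⟩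
      rw [Real.norm_eq_abs, abs_mul, abs_div, abs_of_nonneg (hφ0 x)]
      have h1 : |Real.sqrt ((Xm + u - x) ^ 2 + Ym ^ 2)
          - Real.sqrt ((Xm - x) ^ 2 + Ym ^ 2)| / |u| ≤ 1 := by
        rw [div_le_one (abs_pos.2 hu)]; exact habs
      calc _ ≤ 1 * φ x := mul_le_mul_of_nonneg_right h1 (hφ0 x)
        _ = φ x := one_mul _
        _ ≤ M := hφM x
    have hq_eq : ∀ u : ℝ, ∫ x in Set.Ioc 0 W,
        (Real.sqrt ((Xm + u - x) ^ 2 + Ym ^ 2) - Real.sqrt ((Xm - x) ^ 2 + Ym ^ 2)) / u * φ x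
        = (F (Xm + u) Ym - F Xm Ym) / u := by
      intro u
      have e : (fun x => (Real.sqrt ((Xm + u - x) ^ 2 + Ym ^ 2)
            - Real.sqrt ((Xm - x) ^ 2 + Ym ^ 2)) / u * φ x)
          = fun x => (Real.sqrt ((Xm + u - x) ^ 2 + Ym ^ 2) * φ x
            - Real.sqrt ((Xm - x) ^ 2 + Ym ^ 2) * φ x) / u := by
        funext x; ring
      rw [e, integral_div, integral_sub (hint (Xm + u) Ym) (hint Xm Ym), hF]
    have hFge : ∀ u : ℝ, F Xm Ym ≤ F (Xm + u) Ym := by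
      intro u
      have h1 := hFm (Xm + u) Ym hYm
      have h2 : c * F Xm Ym ≤ c * F (Xm + u) Ym := by linarith
      exact le_of_mul_le_mul_left h2 hcpos
    have hlim : ∀ (u : ℕ → ℝ), (∀ n, u n ≠ 0) → Tendsto u atTop (𝓝 0) →
        Tendsto (fun n => ∫ x in Set.Ioc 0 W,
          (Real.sqrt ((Xm + u n - x) ^ 2 + Ym ^ 2) - Real.sqrt ((Xm - x) ^ 2 + Ym ^ 2)) / u n * φ x)
          atTop (𝓝 (∫ x in Set.Ioc 0 W, l x * φ x)) := by
      intro u hu hu0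
      apply tendsto_integral_of_dominated_convergence (bound := fun _ => M)
      · intro n
        exact (int_on hφm hφ0 hφM _
          (((hcont (Xm + u n) Ym).sub (hcont Xm Ym)).div_const _)).aestronglyMeasurable
      · exact integrableOn_const measure_Ioc_lt_top.ne
      · intro n; exact ae_of_all _ (hbound (u n) (hu n))
      · exact ae_of_all _ fun x => (hslope u hu hu0 x).mul_const (φ x)
    have hXpos : 0 < Xm := by
      by_contra hXle
      push_neg at hXle
      have hq_ge : ∀ n : ℕ, 0 ≤ ∫ x in Set.Ioc 0 W,
          (Real.sqrt ((Xm + t n - x) ^ 2 + Ym ^ 2) - Real.sqrt ((Xm - x) ^ 2 + Ym ^ 2)) / t n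
            * φ x := by
        intro n
        rw [hq_eq (t n)]
        exact div_nonneg (by linarith [hFge (t n)]) (htpos n).le
      have hD := ge_of_tendsto' (hlim t (fun n => (htpos n).ne') ht0) hq_ge
      have hpos := int_pos hφm hφ0 hφM hφ1' (fun x => -(l x)) hlcont.neg
        (fun x hx => by
          rw [hl]
          have h7 : Xm - x ≤ 0 := by linarith [hx.1]
          exact neg_nonneg.2 (div_nonpos_iff.mpr (Or.inr ⟨h7, (hden x).le⟩)))
        (W + 1)
        (fun x hx _ => by
          simp only [hl]
          rw [← neg_div, neg_sub]
          exact div_pos (by linarith [hx.1]) (hden x))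
      have he : ∫ x in Set.Ioc 0 W, (-(l x)) * φ x = - ∫ x in Set.Ioc 0 W, l x * φ x := by
        rw [← integral_neg]; congr 1; funext x; ring
      rw [he] at hpos
      linarith
    have hXlt : Xm < W := by
      by_contra hXge
      push_neg at hXge
      have hq_le : ∀ n : ℕ, (∫ x in Set.Ioc 0 W,
          (Real.sqrt ((Xm + (-(t n)) - x) ^ 2 + Ym ^ 2) - Real.sqrt ((Xm - x) ^ 2 + Ym ^ 2))
            / (-(t n)) * φ x) ≤ 0 := by
        intro n
        rw [hq_eq (-(t n))]
        apply div_nonpos_iff.mpr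
        exact Or.inl ⟨by linarith [hFge (-(t n))], by linarith [htpos n]⟩
      have hneg : ∀ n : ℕ, -(t n) ≠ 0 := fun n => neg_ne_zero.2 (htpos n).ne'
      have hneg0 : Tendsto (fun n => -(t n)) atTop (𝓝 0) := by
        simpa using ht0.neg
      have hD := le_of_tendsto' (hlim (fun n => -(t n)) hneg hneg0) hq_le
      have hpos := int_pos hφm hφ0 hφM hφ1' l hlcont
        (fun x hx => by
          rw [hl]
          exact div_nonneg (by linarith [hx.2]) (hden x).le)
        Xm
        (fun x hx hne => by
          rw [hl]
          have h7 : x < Xm := lt_of_le_of_ne (le_trans hx.2 hXge) hne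
          exact div_pos (by linarith) (hden x))
      linarith
    exact ⟨hYpos, hXpos, hXlt⟩
  obtain ⟨hYpos, hXpos, hXlt⟩ := hprop Xs Ys hYs hmin
  refine ⟨Xs, Ys, hYs, hmin, ?_, hXpos, hXlt, hYpos⟩
  -- uniqueness
  intro X' Y' hY' hmin'
  by_cases heq : X' = Xs ∧ Y' = Ys
  · exact heq
  exfalso
  obtain ⟨hY'pos, hX'pos, hX'lt⟩ := hprop X' Y' hY' hmin'
  have hval : Hexp X' Y' = Hexp Xs Ys :=
    le_antisymm (hmin' Xs Ys hYs) (hmin X' Y' hY')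
  set Xm2 : ℝ := (Xs + X') / 2 with hXm2
  set Ym2 : ℝ := (Ys + Y') / 2 with hYm2
  have hYm2pos : 0 < Ym2 := by rw [hYm2]; positivity
  set x₀ : ℝ := if Ys = Y' then W + 1 else (Xs * Y' - X' * Ys) / (Y' - Ys) with hx₀
  have hkey : ∀ x : ℝ, x ≠ x₀ → (Xs - x) * Y' ≠ (X' - x) * Ys := by
    intro x hx hcon
    by_cases hYY : Ys = Y'
    · have hXX : Xs = X' := by
        rw [← hYY] at hcon
        have h8 := mul_right_cancel₀ hYpos.ne' hcon
        linarith
      exact heq ⟨hXX.symm, hYY.symm⟩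
    · apply hx
      rw [hx₀, if_neg hYY]
      have hYd : Y' - Ys ≠ 0 := sub_ne_zero.mpr (Ne.symm hYY)
      field_simp
      linear_combination -hcon
  have hdbl : ∀ x : ℝ, Real.sqrt (((Xs - x) + (X' - x)) ^ 2 + (Ys + Y') ^ 2)
      = 2 * Real.sqrt ((Xm2 - x) ^ 2 + Ym2 ^ 2) := by
    intro x
    rw [show (Xs - x) + (X' - x) = 2 * (Xm2 - x) by rw [hXm2]; ring,
      show Ys + Y' = 2 * Ym2 by rw [hYm2]; ring, double_sqrt]
  set ψ : ℝ → ℝ := fun x => Real.sqrt ((Xs - x) ^ 2 + Ys ^ 2)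
      + Real.sqrt ((X' - x) ^ 2 + Y' ^ 2) - 2 * Real.sqrt ((Xm2 - x) ^ 2 + Ym2 ^ 2) with hψ
  have hψc : Continuous ψ := ((hcont Xs Ys).add (hcont X' Y')).sub
    (continuous_const.mul (hcont Xm2 Ym2))
  have hψ0 : ∀ x ∈ Set.Ioc (0:ℝ) W, 0 ≤ ψ x := by
    intro x _
    have h8 := tri_le (Xs - x) (X' - x) Ys Y'
    rw [hdbl x] at h8
    simp only [hψ]; linarith
  have hψp : ∀ x ∈ Set.Ioc (0:ℝ) W, x ≠ x₀ → 0 < ψ x := by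
    intro x _ hx
    have h8 := tri_lt (Xs - x) (X' - x) Ys Y' (hkey x hx)
    rw [hdbl x] at h8
    simp only [hψ]; linarith
  have hpos := int_pos hφm hφ0 hφM hφ1' ψ hψc hψ0 x₀ hψp
  have hsplit : ∫ x in Set.Ioc 0 W, ψ x * φ x
      = F Xs Ys + F X' Y' - 2 * F Xm2 Ym2 := by
    have e : (fun x => ψ x * φ x) = fun x =>
        (Real.sqrt ((Xs - x) ^ 2 + Ys ^ 2) * φ x + Real.sqrt ((X' - x) ^ 2 + Y' ^ 2) * φ x)
          - 2 * (Real.sqrt ((Xm2 - x) ^ 2 + Ym2 ^ 2) * φ x) := by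
      funext x; simp only [hψ]; ring
    have hintadd : IntegrableOn (fun x => Real.sqrt ((Xs - x) ^ 2 + Ys ^ 2) * φ x
        + Real.sqrt ((X' - x) ^ 2 + Y' ^ 2) * φ x) (Set.Ioc 0 W) :=
      (hint Xs Ys).add (hint X' Y')
    rw [e, integral_sub hintadd ((hint Xm2 Ym2).const_mul 2),
      integral_add (hint Xs Ys) (hint X' Y'), integral_const_mul, hF]
  rw [hsplit] at hpos
  have hvalF : c * F X' Y' - c * v * Y' = c * F Xs Ys - c * v * Ys := by
    rw [← hH, ← hH]; exact hval
  have h4 : 2 * F Xm2 Ym2 < F Xs Ys + F X' Y' := by linarith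
  have h5 := mul_lt_mul_of_pos_left h4 hcpos
  have h7 : c * v * Ym2 * 2 = c * v * Ys + c * v * Y' := by rw [hYm2]; ring
  have h3 : Hexp Xm2 Ym2 < Hexp Xs Ys := by
    rw [hH Xm2 Ym2, hH Xs Ys]
    ring_nf at h5 h7 hvalF ⊢
    linarith
  have h1 := hmin Xm2 Ym2 hYm2pos.le
  linarith
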